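/- Let γ > 0 and F₀ > 0. Define g : (0,∞) → ℝ by g(t) = t⁴·F₀ if t⁴·F₀ ≤ γ²/4, and g(t) = γ·t²·√F₀ − γ²/4 otherwise. Then g is differentiable on (0,∞) and the map t ↦ g'(t)/t is nondecreasing on (0,∞). -/

import Mathlib

/-- The truncated nonlinearity along the ray `t ↦ (t·s₀, t·t₀)`, where
`F₀ = F(s₀,t₀)`: `g(t) = t⁴F₀` if `t⁴F₀ ≤ γ²/4`, and
`g(t) = γ t² √F₀ − γ²/4` otherwise. -/
noncomputable def g (γ F₀ t : ℝ) : ℝ :=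
  if t ^ 4 * F₀ ≤ γ ^ 2 / 4 then t ^ 4 * F₀
  else γ * t ^ 2 * Real.sqrt F₀ - γ ^ 2 / 4

lemma sq_min_hasDerivAt (x : ℝ) :
    HasDerivAt (fun y : ℝ => (min y 0) ^ 2) (2 * min x 0) x := by
  rcases lt_trichotomy x 0 with hx | hx | hx
  · have heq : (fun y : ℝ => (min y 0) ^ 2) =ᶠ[nhds x] fun y => y ^ 2 := by
      filter_upwards [Iio_mem_nhds hx] with y hy
      rw [min_eq_left (le_of_lt hy)]
    have : HasDerivAt (fun y : ℝ => y ^ 2) (2 * x) x := by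
      simpa using hasDerivAt_pow 2 x
    have := this.congr_of_eventuallyEq heq
    simpa [min_eq_left hx.le] using this
  · subst hx
    rw [hasDerivAt_iff_tendsto_slope]
    simp only [min_self, mul_zero]
    apply squeeze_zero_norm (a := fun y : ℝ => |y|)
    · intro y
      have h1 : (min y 0) ^ 2 ≤ y ^ 2 := by
        rcases le_total y 0 with h | h
        · rw [min_eq_left h]
        · rw [min_eq_right h]; simpa using sq_nonneg y
      rcases eq_or_ne y 0 with rfl | hy
      · simp
      · have h2 : slope (fun y : ℝ => (min y 0) ^ 2) 0 y = (min y 0) ^ 2 / y := by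
          rw [slope_def_field]
          rw [min_self]
          ring
        rw [h2, Real.norm_eq_abs, abs_div, div_le_iff₀ (abs_pos.mpr hy)]
        calc |(min y 0) ^ 2| = (min y 0) ^ 2 := abs_of_nonneg (sq_nonneg _)
          _ ≤ y ^ 2 := h1
          _ = |y| * |y| := by rw [abs_mul_abs_self]; ring
    · have : Filter.Tendsto (fun y : ℝ => |y|) (nhds 0) (nhds 0) := by
        simpa using continuous_abs.tendsto (0 : ℝ)
      exact this.mono_left nhdsWithin_le_nhds
  · have heq : (fun y : ℝ => (min y 0) ^ 2) =ᶠ[nhds x] fun _ => (0 : ℝ) := by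
      filter_upwards [Ioi_mem_nhds hx] with y hy
      rw [min_eq_right (le_of_lt hy)]
      norm_num
    have : HasDerivAt (fun _ : ℝ => (0 : ℝ)) 0 x := hasDerivAt_const x 0
    have := this.congr_of_eventuallyEq heq
    simpa [min_eq_right hx.le] using this

lemma g_eq (γ F₀ : ℝ) (hγ : 0 < γ) (hF₀ : 0 < F₀) (t : ℝ) :
    g γ F₀ t = γ * t ^ 2 * Real.sqrt F₀ - γ ^ 2 / 4 +
      (min (t ^ 2 * Real.sqrt F₀ - γ / 2) 0) ^ 2 := by
  have hs : Real.sqrt F₀ ^ 2 = F₀ := Real.sq_sqrt hF₀.le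
  have hs0 : (0 : ℝ) ≤ Real.sqrt F₀ := Real.sqrt_nonneg F₀
  set a := t ^ 2 * Real.sqrt F₀ with ha
  have ha0 : 0 ≤ a := by positivity
  have haa : a ^ 2 = t ^ 4 * F₀ := by rw [ha]; nlinarith [hs]
  unfold g
  by_cases h : t ^ 4 * F₀ ≤ γ ^ 2 / 4
  · rw [if_pos h]
    have hle : a ≤ γ / 2 := by nlinarith
    rw [min_eq_left (by linarith)]
    nlinarith
  · rw [if_neg h]
    have hgt : γ / 2 < a := by nlinarith
    rw [min_eq_right (by linarith)]
    ring

lemma g_hasDerivAt (γ F₀ : ℝ) (hγ : 0 < γ) (hF₀ : 0 < F₀) (t : ℝ) :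
    HasDerivAt (g γ F₀)
      (2 * γ * t * Real.sqrt F₀ +
        2 * min (t ^ 2 * Real.sqrt F₀ - γ / 2) 0 * (2 * t * Real.sqrt F₀)) t := by
  have hfun : g γ F₀ = fun t => γ * t ^ 2 * Real.sqrt F₀ - γ ^ 2 / 4 +
      (min (t ^ 2 * Real.sqrt F₀ - γ / 2) 0) ^ 2 := by
    funext t; exact g_eq γ F₀ hγ hF₀ t
  rw [hfun]
  have hu : HasDerivAt (fun t : ℝ => t ^ 2 * Real.sqrt F₀ - γ / 2)
      (2 * t * Real.sqrt F₀) t := by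
    have := (hasDerivAt_pow 2 t).mul_const (Real.sqrt F₀)
    simpa using (this.sub_const (γ / 2))
  have hcomp := (sq_min_hasDerivAt (t ^ 2 * Real.sqrt F₀ - γ / 2)).comp t hu
  have h1 : HasDerivAt (fun t : ℝ => γ * t ^ 2 * Real.sqrt F₀ - γ ^ 2 / 4)
      (2 * γ * t * Real.sqrt F₀) t := by
    have := ((hasDerivAt_pow 2 t).const_mul γ).mul_const (Real.sqrt F₀)
    have := this.sub_const (γ ^ 2 / 4)
    exact this.congr_deriv (by ring)
  exact (h1.add hcomp)

theorem stmt_7 (γ F₀ : ℝ) (hγ : 0 < γ) (hF₀ : 0 < F₀) :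
    (∀ t ∈ Set.Ioi (0 : ℝ), DifferentiableAt ℝ (g γ F₀) t) ∧
    MonotoneOn (fun t => deriv (g γ F₀) t / t) (Set.Ioi (0 : ℝ)) := by
  have hd := g_hasDerivAt γ F₀ hγ hF₀
  constructor
  · intro t _; exact (hd t).differentiableAt
  · intro x hx y hy hxy
    have hx0 : (0 : ℝ) < x := hx
    have hy0 : (0 : ℝ) < y := hy
    have key : ∀ t : ℝ, 0 < t → deriv (g γ F₀) t / t =
        2 * γ * Real.sqrt F₀ + 4 * Real.sqrt F₀ * min (t ^ 2 * Real.sqrt F₀ - γ / 2) 0 := by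
      intro t ht
      rw [(hd t).deriv]
      field_simp
      ring
    simp only [key x hx0, key y hy0]
    have hmin : min (x ^ 2 * Real.sqrt F₀ - γ / 2) 0 ≤
        min (y ^ 2 * Real.sqrt F₀ - γ / 2) 0 := by
      apply min_le_min _ le_rfl
      have : x ^ 2 ≤ y ^ 2 := by nlinarith
      nlinarith [Real.sqrt_nonneg F₀]
    nlinarith [Real.sqrt_nonneg F₀]
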